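/- Let m be an even positive integer, k a positive integer with gcd(2^k + 1, 2^m + 1) = 1, and s an integer. Let U = {x ∈ F_{2^{2m}} : x^{2^m+1} = 1}. Then the map sending x ∈ U to (x^{2^k+2s+1} + x^{2^k+2s} + x^{2^k+s+1} + x^{2^k+s} + x^{2^k+1} + x^{2^k} + x^{2s+1} + x^{s+1} + x)/(x^{2^k+2s} + x^{2^k+s} + x^{2^k} + x^{2s+1} + x^{2s} + x^{s+1} + x^s + x + 1) is well-defined (the denominator never vanishes on U) and is a bijection from U to U. -/

import Mathlib

namespace Stmt7Aux

lemma three_dvd_two_pow_sub_one {m : ℕ} (hme : Even m) : 3 ∣ 2 ^ m - 1 := by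
  obtain ⟨j, rfl⟩ := hme
  have h4 : (2:ℕ) ^ (j + j) = 4 ^ j := by
    rw [← two_mul, pow_mul]; norm_num
  rw [h4]
  simpa using Nat.sub_dvd_pow_sub_pow 4 1 j

lemma not_three_dvd_two_pow_add_one {m : ℕ} (hme : Even m) : ¬ 3 ∣ 2 ^ m + 1 := by
  intro h
  have h1 := three_dvd_two_pow_sub_one hme
  have hpos : 1 ≤ 2 ^ m := Nat.one_le_two_pow
  omega

lemma gcd_two_pow_sub_one {k m : ℕ} (hko : Odd k) (hme : Even m) :
    Nat.gcd (2 ^ k - 1) (2 ^ m + 1) = 1 := by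
  set g := Nat.gcd (2 ^ k - 1) (2 ^ m + 1) with hgdef
  have hgk : g ∣ 2 ^ k - 1 := Nat.gcd_dvd_left _ _
  have hgm : g ∣ 2 ^ m + 1 := Nat.gcd_dvd_right _ _
  have h2k : (2 : ZMod g) ^ k = 1 := by
    have h1 : ((2 ^ k - 1 : ℕ) : ZMod g) = 0 := (ZMod.natCast_eq_zero_iff _ _).2 hgk
    have h2 : (1:ℕ) ≤ 2 ^ k := Nat.one_le_two_pow
    calc (2 : ZMod g) ^ k = ((2 ^ k : ℕ) : ZMod g) := by push_cast; ring
    _ = ((2 ^ k - 1 : ℕ) : ZMod g) + ((1:ℕ) : ZMod g) := by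
        rw [← Nat.cast_add]; congr 1; omega
    _ = 1 := by rw [h1]; simp
  have h2m : (2 : ZMod g) ^ m = -1 := by
    have h1 : ((2 ^ m + 1 : ℕ) : ZMod g) = 0 := (ZMod.natCast_eq_zero_iff _ _).2 hgm
    push_cast at h1
    linear_combination h1
  have h22m : (2 : ZMod g) ^ (2 * m) = 1 := by
    rw [mul_comm, pow_mul, h2m]; ring
  have hd : orderOf (2 : ZMod g) ∣ Nat.gcd k (2 * m) :=
    Nat.dvd_gcd (orderOf_dvd_of_pow_eq_one h2k) (orderOf_dvd_of_pow_eq_one h22m)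
  have h2d : (2 : ZMod g) ^ Nat.gcd k (2 * m) = 1 := orderOf_dvd_iff_pow_eq_one.mp hd
  have hdodd : ¬ 2 ∣ Nat.gcd k (2 * m) := by
    intro h2
    have := h2.trans (Nat.gcd_dvd_left k (2*m))
    rcases hko with ⟨j, rfl⟩
    omega
  have hdm : Nat.gcd k (2 * m) ∣ m := by
    have h1 : Nat.gcd k (2 * m) ∣ 2 * m := Nat.gcd_dvd_right _ _
    exact (Nat.Coprime.dvd_of_dvd_mul_left (by
      rw [Nat.coprime_comm]
      exact (Nat.coprime_two_left).mpr (Nat.odd_iff.mpr (by omega))) h1)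
  have h2mone : (2 : ZMod g) ^ m = 1 := by
    obtain ⟨c, hc⟩ := hdm
    rw [hc, pow_mul, h2d, one_pow]
  have hone : (1 : ZMod g) = -1 := h2mone.symm.trans h2m
  have hg2 : g ∣ 2 := by
    have h0 : ((2:ℕ) : ZMod g) = 0 := by
      push_cast
      linear_combination hone
    exact (ZMod.natCast_eq_zero_iff _ _).1 h0
  have hodd : ¬ 2 ∣ g := by
    intro h2g
    have hdvd : 2 ∣ 2 ^ k - 1 := h2g.trans hgk
    have hk1 : 1 ≤ k := hko.pos
    have h2k' : 2 ∣ 2 ^ k := dvd_pow_self 2 (by omega)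
    have : 1 ≤ 2 ^ k := Nat.one_le_two_pow
    omega
  rcases (Nat.dvd_prime Nat.prime_two).mp hg2 with h | h
  · exact h
  · rw [h] at hodd; exact absurd dvd_rfl hodd

section FieldLemmas
variable {F : Type*} [Field F] [CharP F 2] {m : ℕ}

lemma two_eq_zeroF : (2:F) = 0 := by
  have := CharP.cast_eq_zero F 2
  exact_mod_cast this

lemma ne_zero_of_pow_eq_one {n : ℕ} (hn : n ≠ 0) {x : F} (hx : x ^ n = 1) : x ≠ 0 := by
  intro h; rw [h, zero_pow hn] at hx; exact zero_ne_one hx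

lemma cube_ne_zero (hme : Even m) {x : F} (hx : x ^ (2^m+1) = 1) : x^2 + x + 1 ≠ 0 := by
  intro h
  have htwo : (2:F) = 0 := two_eq_zeroF
  have hx3 : x ^ 3 = 1 := by linear_combination (x+1) * h - (x^2+x+1) * htwo
  have h1 : orderOf x ∣ 3 := orderOf_dvd_of_pow_eq_one hx3
  have h2 : orderOf x ∣ 2^m + 1 := orderOf_dvd_of_pow_eq_one hx
  have h3 : Nat.gcd 3 (2^m+1) = 1 := by
    rcases (Nat.prime_three).eq_one_or_self_of_dvd _ (Nat.gcd_dvd_left 3 (2^m+1)) with h' | h'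
    · exact h'
    · exact absurd (h' ▸ Nat.gcd_dvd_right 3 (2^m+1)) (not_three_dvd_two_pow_add_one hme)
  have h4 : orderOf x ∣ 1 := h3 ▸ Nat.dvd_gcd h1 h2
  have hx1 : x = 1 := orderOf_eq_one_iff.mp (Nat.dvd_one.mp h4)
  rw [hx1] at h
  have : (1:F) = 0 := by linear_combination h - htwo
  exact one_ne_zero this

lemma U_pow_frob {x : F} (hx : x ^ (2^m+1) = 1) : x ^ (2^m) = x⁻¹ :=
  eq_inv_of_mul_eq_one_left (by rw [← pow_succ]; exact hx)

lemma gU_ne_zero (hme : Even m) (k : ℕ) {x : F} (hx : x ^ (2^m+1) = 1) :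
    x ^ (2^k) + x + 1 ≠ 0 := by
  intro h
  have htwo : (2:F) = 0 := two_eq_zeroF
  have hx0 : x ≠ 0 := ne_zero_of_pow_eq_one (by positivity) hx
  have hfr : (x⁻¹) ^ (2^k) + x⁻¹ + 1 = 0 := by
    have h1 : (x ^ (2^k) + x + 1) ^ (2^m) = 0 := by rw [h, zero_pow (by positivity)]
    rw [add_pow_char_pow, add_pow_char_pow, one_pow] at h1
    have h2 : (x ^ (2^m)) ^ (2^k) + x ^ (2^m) + 1 = 0 := by
      rw [pow_right_comm]; exact h1
    rw [U_pow_frob hx] at h2; exact h2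
  have h3 : ((x⁻¹) ^ (2^k) + x⁻¹ + 1) * (x ^ (2^k) * x) = x + x^(2^k) + x^(2^k)*x := by
    rw [inv_pow]; field_simp
  have h5 : x + x^(2^k) + x^(2^k)*x = 0 := by rw [← h3, hfr, zero_mul]
  have h6 : x^2 + x + 1 = 0 := by
    linear_combination h + h5 + x*h - (x^(2^k) + x + x^(2^k)*x)*htwo
  exact cube_ne_zero hme hx h6

lemma omega_cube {ω : F} (hω : ω^2 + ω + 1 = 0) : ω^3 = 1 := by
  linear_combination (ω - 1) * hω

lemma add_omega_ne_zero (hme : Even m) {ω : F} (hω : ω^2 + ω + 1 = 0)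
    {x : F} (hx : x ^ (2^m+1) = 1) : x + ω ≠ 0 := by
  intro h
  have htwo : (2:F) = 0 := two_eq_zeroF
  have hxe : x = ω := by linear_combination h - ω * htwo
  rw [hxe] at hx
  exact cube_ne_zero hme hx hω

lemma add_omega_sq_ne_zero (hme : Even m) {ω : F} (hω : ω^2 + ω + 1 = 0)
    {x : F} (hx : x ^ (2^m+1) = 1) : x + ω^2 ≠ 0 := by
  intro h
  have htwo : (2:F) = 0 := two_eq_zeroF
  have hxe : x = ω^2 := by linear_combination h - (ω^2) * htwo
  rw [hxe] at hx
  exact cube_ne_zero hme hx (by linear_combination (ω^2 - ω + 1) * hω)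

lemma keyA {ω : F} (hω : ω^2 + ω + 1 = 0) {x : F} (hx0 : x ≠ 0) :
    (x⁻¹ + ω^2) * (x + ω^2) = ω * ((x⁻¹ + ω) * (x + ω)) := by
  have hω3 : ω^3 = 1 := omega_cube hω
  field_simp
  linear_combination (x*(ω-1))*hω3

lemma omega_pow_even {k : ℕ} (hke : Even k) {ω : F} (hω3 : ω^3 = 1) :
    ω^(2^k) = ω := by
  obtain ⟨t, ht⟩ := three_dvd_two_pow_sub_one hke
  have h1 : 2^k = 3*t + 1 := by have : 1 ≤ 2^k := Nat.one_le_two_pow; omega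
  rw [h1, pow_add, pow_mul, hω3, one_pow, pow_one, one_mul]

lemma omega_pow_odd {k : ℕ} (hko : Odd k) {ω : F} (hω3 : ω^3 = 1) :
    ω^(2^k) = ω^2 := by
  have hk1 : 1 ≤ k := hko.pos
  have he : Even (k-1) := by rcases hko with ⟨j, rfl⟩; simpa using (even_two_mul j)
  obtain ⟨t, ht⟩ := three_dvd_two_pow_sub_one he
  have h2 : 2^k = 2 * 2^(k-1) := by
    conv_lhs => rw [show k = (k-1)+1 from by omega, pow_succ]
    ring
  have h1 : 2^k = 3*(2*t) + 2 := by
    have : 1 ≤ 2^(k-1) := Nat.one_le_two_pow; omega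
  rw [h1, pow_add, pow_mul, hω3, one_pow, one_mul]

lemma theta_norm (hme : Even m) {ω : F} (hω : ω^2 + ω + 1 = 0)
    {x : F} (hx : x ^ (2^m+1) = 1) :
    (x + ω^2)^(2^m+1) = ω * (x + ω)^(2^m+1) := by
  have hx0 : x ≠ 0 := ne_zero_of_pow_eq_one (by positivity) hx
  have hω3 : ω^3 = 1 := omega_cube hω
  have hωm : ω^(2^m) = ω := omega_pow_even hme hω3
  have hω2m : (ω^2)^(2^m) = ω^2 := by
    rw [← pow_mul, mul_comm, pow_mul, hωm]
  have h1 : (x + ω^2)^(2^m) = x⁻¹ + ω^2 := by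
    rw [add_pow_char_pow, U_pow_frob hx, hω2m]
  have h2 : (x + ω)^(2^m) = x⁻¹ + ω := by
    rw [add_pow_char_pow, U_pow_frob hx, hωm]
  rw [pow_succ (x + ω^2) (2^m), pow_succ (x + ω) (2^m), h1, h2]
  exact keyA hω hx0

end FieldLemmas

theorem main {F : Type*} [Field F] [CharP F 2] [Finite F]
    (m k : ℕ) (hm : 0 < m) (hme : Even m) (hk : 0 < k)
    (hgcd : Nat.gcd (2 ^ k + 1) (2 ^ m + 1) = 1) (s : ℤ)
    (hcard : Nat.card F = 2 ^ (2 * m)) :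
    (∀ x : F, x ^ (2 ^ m + 1) = 1 →
        x ^ ((2:ℤ) ^ k + 2 * s) + x ^ ((2:ℤ) ^ k + s) + x ^ ((2:ℤ) ^ k)
          + x ^ (2 * s + 1) + x ^ (2 * s) + x ^ (s + 1) + x ^ s + x + 1 ≠ 0) ∧
      Set.BijOn
        (fun x : F =>
          (x ^ ((2:ℤ) ^ k + 2 * s + 1) + x ^ ((2:ℤ) ^ k + 2 * s) + x ^ ((2:ℤ) ^ k + s + 1)
              + x ^ ((2:ℤ) ^ k + s) + x ^ ((2:ℤ) ^ k + 1) + x ^ ((2:ℤ) ^ k)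
              + x ^ (2 * s + 1) + x ^ (s + 1) + x) /
            (x ^ ((2:ℤ) ^ k + 2 * s) + x ^ ((2:ℤ) ^ k + s) + x ^ ((2:ℤ) ^ k)
              + x ^ (2 * s + 1) + x ^ (2 * s) + x ^ (s + 1) + x ^ s + x + 1))
        {x : F | x ^ (2 ^ m + 1) = 1}
        {x : F | x ^ (2 ^ m + 1) = 1} := by
  have htwo : (2:F) = 0 := two_eq_zeroF
  -- obtain a primitive cube root of unity
  obtain ⟨ω, hω⟩ : ∃ ω : F, ω^2 + ω + 1 = 0 := by
    have hcardU : Nat.card Fˣ = 2^(2*m) - 1 := by rw [Nat.card_units, hcard]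
    have h3dvd : (3:ℕ) ∣ 2^(2*m) - 1 := three_dvd_two_pow_sub_one (even_two_mul m)
    obtain ⟨gen, hgen⟩ := IsCyclic.exists_generator (α := Fˣ)
    have hord : orderOf gen = Nat.card Fˣ := orderOf_eq_card_of_forall_mem_zpowers hgen
    have hge : 4 ≤ 2^(2*m) := by
      calc (4:ℕ) = 2^2 := by norm_num
      _ ≤ 2^(2*m) := Nat.pow_le_pow_right (by norm_num) (by omega)
    have hN3 : 3 ∣ Nat.card Fˣ := by rw [hcardU]; omega
    refine ⟨((gen ^ (Nat.card Fˣ / 3) : Fˣ) : F), ?_⟩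
    have hωu3 : (gen ^ (Nat.card Fˣ / 3))^3 = 1 := by
      rw [← pow_mul, Nat.div_mul_cancel hN3]
      exact pow_card_eq_one'
    have hωune : gen ^ (Nat.card Fˣ / 3) ≠ 1 := by
      intro hh
      have hdvd := orderOf_dvd_of_pow_eq_one hh
      rw [hord] at hdvd
      have hpos : 0 < Nat.card Fˣ / 3 := Nat.div_pos (by omega) (by norm_num)
      have := Nat.le_of_dvd hpos hdvd
      omega
    have hv3 : ((gen ^ (Nat.card Fˣ / 3) : Fˣ) : F)^3 = 1 := by
      rw [← Units.val_pow_eq_pow_val, hωu3, Units.val_one]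
    have hvne : ((gen ^ (Nat.card Fˣ / 3) : Fˣ) : F) ≠ 1 :=
      fun hh => hωune (Units.val_eq_one.mp hh)
    set v : F := ((gen ^ (Nat.card Fˣ / 3) : Fˣ) : F) with hv
    have hfac : (v + 1) * (v^2 + v + 1) = 0 := by
      linear_combination hv3 + (v^2 + v + 1) * htwo
    rcases mul_eq_zero.mp hfac with hh | hh
    · exact absurd (by linear_combination hh - htwo : v = 1) hvne
    · exact hh
  have hω3 : ω^3 = 1 := omega_cube hω
  -- basic U facts
  have hgne : ∀ x : F, x ^ (2^m+1) = 1 → x^(2^k) + x + 1 ≠ 0 :=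
    fun x hx => gU_ne_zero hme k hx
  have hXU : ∀ x : F, x ^ (2^m+1) = 1 → (x^(2^k)) ^ (2^m+1) = 1 := by
    intro x hx
    rw [pow_right_comm, hx, one_pow]
  -- MapsTo for the simplified map
  have hmapsU : ∀ x : F, x ^ (2^m+1) = 1 →
      ((x^(2^k)*x + x^(2^k) + x) / (x^(2^k) + x + 1)) ^ (2^m+1) = 1 := by
    intro x hx
    have hx0 : x ≠ 0 := ne_zero_of_pow_eq_one (by positivity) hx
    have hX0 : x^(2^k) ≠ 0 := pow_ne_zero _ hx0
    have hXU' := hXU x hx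
    have hD0 : x^(2^k) + x + 1 ≠ 0 := hgne x hx
    have hDm : (x^(2^k) + x + 1)^(2^m) * (x^(2^k)*x) = x^(2^k)*x + x^(2^k) + x := by
      rw [add_pow_char_pow, add_pow_char_pow, one_pow, U_pow_frob hXU', U_pow_frob hx]
      field_simp
      ring
    have hNm : (x^(2^k)*x + x^(2^k) + x)^(2^m) * (x^(2^k)*x) = x^(2^k) + x + 1 := by
      rw [add_pow_char_pow, add_pow_char_pow, mul_pow, U_pow_frob hXU', U_pow_frob hx]
      field_simp
      ring
    have hN0 : x^(2^k)*x + x^(2^k) + x ≠ 0 := by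
      intro hh
      rw [hh] at hDm
      exact (mul_ne_zero (pow_ne_zero _ hD0) (mul_ne_zero hX0 hx0)) hDm
    have hpow : (x^(2^k)*x + x^(2^k) + x)^(2^m+1) = (x^(2^k) + x + 1)^(2^m+1) := by
      have hc : (x^(2^k)*x + x^(2^k) + x)^(2^m+1) * (x^(2^k)*x)
          = (x^(2^k) + x + 1)^(2^m+1) * (x^(2^k)*x) := by
        rw [pow_succ (x^(2^k)*x + x^(2^k) + x) (2^m), pow_succ (x^(2^k) + x + 1) (2^m)]
        linear_combination (x^(2^k)*x + x^(2^k) + x) * hNm - (x^(2^k) + x + 1) * hDm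
      exact mul_right_cancel₀ (mul_ne_zero hX0 hx0) hc
    rw [div_pow, hpow, div_self (pow_ne_zero _ hD0)]
  -- injectivity of the simplified map
  have hinj : ∀ x₁ : F, x₁ ^ (2^m+1) = 1 → ∀ x₂ : F, x₂ ^ (2^m+1) = 1 →
      (x₁^(2^k)*x₁ + x₁^(2^k) + x₁) / (x₁^(2^k) + x₁ + 1)
        = (x₂^(2^k)*x₂ + x₂^(2^k) + x₂) / (x₂^(2^k) + x₂ + 1) → x₁ = x₂ := by
    intro x₁ hx₁ x₂ hx₂ heq
    have hD₁ : x₁^(2^k) + x₁ + 1 ≠ 0 := hgne x₁ hx₁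
    have hD₂ : x₂^(2^k) + x₂ + 1 ≠ 0 := hgne x₂ hx₂
    set y : F := (x₁^(2^k)*x₁ + x₁^(2^k) + x₁) / (x₁^(2^k) + x₁ + 1) with hydef
    have hyU : y ^ (2^m+1) = 1 := hmapsU x₁ hx₁
    have rel₁ : y * (x₁^(2^k) + x₁ + 1) = x₁^(2^k)*x₁ + x₁^(2^k) + x₁ := by
      rw [hydef]; exact div_mul_cancel₀ _ hD₁
    have rel₂ : y * (x₂^(2^k) + x₂ + 1) = x₂^(2^k)*x₂ + x₂^(2^k) + x₂ := by
      rw [heq]; exact div_mul_cancel₀ _ hD₂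
    have hyω2 : y + ω^2 ≠ 0 := add_omega_sq_ne_zero hme hω hyU
    set X₁ : F := x₁^(2^k) with hX₁def
    set X₂ : F := x₂^(2^k) with hX₂def
    have id₁ : (y+ω^2)*((X₁+ω^2)*(x₁+ω^2)) = (y+ω)*((X₁+ω)*(x₁+ω)) := by
      linear_combination (-(2*ω+1)) * rel₁
        + (x₁*y + X₁*y + X₁*x₁ - x₁ - y - X₁ + (ω^2-ω)*(x₁+y+X₁) + ω^4 - ω^3) * hω
        + ((2*ω+1)*(y - X₁*x₁)) * htwo
    have id₂ : (y+ω^2)*((X₂+ω^2)*(x₂+ω^2)) = (y+ω)*((X₂+ω)*(x₂+ω)) := by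
      linear_combination (-(2*ω+1)) * rel₂
        + (x₂*y + X₂*y + X₂*x₂ - x₂ - y - X₂ + (ω^2-ω)*(x₂+y+X₂) + ω^4 - ω^3) * hω
        + ((2*ω+1)*(y - X₂*x₂)) * htwo
    have h5 : ((X₁+ω^2)*(x₁+ω^2)) * ((X₂+ω)*(x₂+ω))
        = ((X₂+ω^2)*(x₂+ω^2)) * ((X₁+ω)*(x₁+ω)) := by
      apply mul_left_cancel₀ hyω2
      linear_combination ((X₂+ω)*(x₂+ω)) * id₁ - ((X₁+ω)*(x₁+ω)) * id₂
    have hAne : (x₁+ω^2)*(x₂+ω) ≠ 0 :=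
      mul_ne_zero (add_omega_sq_ne_zero hme hω hx₁) (add_omega_ne_zero hme hω hx₂)
    have hBne : (x₂+ω^2)*(x₁+ω) ≠ 0 :=
      mul_ne_zero (add_omega_sq_ne_zero hme hω hx₂) (add_omega_ne_zero hme hω hx₁)
    set A : F := (x₁+ω^2)*(x₂+ω) with hAdef
    set B : F := (x₂+ω^2)*(x₁+ω) with hBdef
    have hnorm : A^(2^m+1) = B^(2^m+1) := by
      rw [hAdef, hBdef, mul_pow, mul_pow, theta_norm hme hω hx₁, theta_norm hme hω hx₂]
      ring
    have ht2 : (A/B)^(2^m+1) = 1 := by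
      rw [div_pow, hnorm, div_self (pow_ne_zero _ hBne)]
    have hABeq : A = B → x₁ = x₂ := by
      intro hAB
      rw [hAdef, hBdef] at hAB
      linear_combination hAB + (x₁-x₂)*hω - (ω*(x₁-x₂))*htwo
    rcases Nat.even_or_odd k with hke | hko
    · -- k even
      have hωq : ω^(2^k) = ω := omega_pow_even hke hω3
      have hω2q : (ω^2)^(2^k) = ω^2 := by rw [← pow_mul, mul_comm, pow_mul, hωq]
      have hfq : ∀ x : F, (x+ω)^(2^k) = x^(2^k)+ω := fun x => by
        rw [add_pow_char_pow, hωq]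
      have hfq2 : ∀ x : F, (x+ω^2)^(2^k) = x^(2^k)+ω^2 := fun x => by
        rw [add_pow_char_pow, hω2q]
      have hP : A^(2^k+1) = B^(2^k+1) := by
        rw [hAdef, hBdef, pow_succ ((x₁+ω^2)*(x₂+ω)) (2^k), pow_succ ((x₂+ω^2)*(x₁+ω)) (2^k),
          mul_pow, mul_pow, hfq2 x₁, hfq x₂, hfq2 x₂, hfq x₁]
        linear_combination h5
      have ht1 : (A/B)^(2^k+1) = 1 := by
        rw [div_pow, hP, div_self (pow_ne_zero _ hBne)]
      have hdvd := Nat.dvd_gcd (orderOf_dvd_of_pow_eq_one ht1) (orderOf_dvd_of_pow_eq_one ht2)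
      rw [hgcd] at hdvd
      have htone : A/B = 1 := orderOf_eq_one_iff.mp (Nat.dvd_one.mp hdvd)
      exact hABeq ((div_eq_one_iff_eq hBne).mp htone)
    · -- k odd
      have hωq : ω^(2^k) = ω^2 := omega_pow_odd hko hω3
      have hω2q : (ω^2)^(2^k) = ω := by
        rw [← pow_mul, mul_comm, pow_mul, hωq]
        linear_combination ω * hω3
      have hfq : ∀ x : F, (x+ω)^(2^k) = x^(2^k)+ω^2 := fun x => by
        rw [add_pow_char_pow, hωq]
      have hfq2 : ∀ x : F, (x+ω^2)^(2^k) = x^(2^k)+ω := fun x => by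
        rw [add_pow_char_pow, hω2q]
      have h6 : B^(2^k) * A = A^(2^k) * B := by
        rw [hAdef, hBdef, mul_pow, mul_pow, hfq2 x₂, hfq x₁, hfq2 x₁, hfq x₂]
        linear_combination h5
      have ht : (A/B)^(2^k) = A/B := by
        rw [div_pow, div_eq_div_iff (pow_ne_zero _ hBne) hBne]
        linear_combination -h6
      have ht1 : (A/B)^(2^k - 1) = 1 := by
        have hq1 : 2^k = (2^k - 1) + 1 := by
          have : (1:ℕ) ≤ 2^k := Nat.one_le_two_pow; omega
        have hAB0 : A/B ≠ 0 := div_ne_zero hAne hBne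
        have h7 : (A/B)^(2^k-1) * (A/B) = 1 * (A/B) := by
          rw [one_mul, ← pow_succ, ← hq1]; exact ht
        exact mul_right_cancel₀ hAB0 h7
      have hgcd' : Nat.gcd (2^k - 1) (2^m + 1) = 1 := gcd_two_pow_sub_one hko hme
      have hdvd := Nat.dvd_gcd (orderOf_dvd_of_pow_eq_one ht1) (orderOf_dvd_of_pow_eq_one ht2)
      rw [hgcd'] at hdvd
      have htone : A/B = 1 := orderOf_eq_one_iff.mp (Nat.dvd_one.mp hdvd)
      exact hABeq ((div_eq_one_iff_eq hBne).mp htone)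
  -- zpow factorizations
  have hfactD : ∀ x : F, x ≠ 0 →
      x ^ ((2:ℤ) ^ k + 2 * s) + x ^ ((2:ℤ) ^ k + s) + x ^ ((2:ℤ) ^ k)
          + x ^ (2 * s + 1) + x ^ (2 * s) + x ^ (s + 1) + x ^ s + x + 1
        = (x^(2^k) + x + 1) * ((x^s)^2 + x^s + 1) := by
    intro x hx0
    have hzq : x ^ ((2:ℤ)^k) = x ^ (2^k : ℕ) := by
      rw [show ((2:ℤ)^k) = ((2^k : ℕ) : ℤ) by push_cast; ring, zpow_natCast]
    have hz2s : x ^ (2*s) = (x^s)^2 := by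
      rw [two_mul, zpow_add₀ hx0, sq]
    simp only [zpow_add₀ hx0, zpow_one, hz2s, hzq]
    ring
  have hfactN : ∀ x : F, x ≠ 0 →
      x ^ ((2:ℤ) ^ k + 2 * s + 1) + x ^ ((2:ℤ) ^ k + 2 * s) + x ^ ((2:ℤ) ^ k + s + 1)
          + x ^ ((2:ℤ) ^ k + s) + x ^ ((2:ℤ) ^ k + 1) + x ^ ((2:ℤ) ^ k)
          + x ^ (2 * s + 1) + x ^ (s + 1) + x
        = (x^(2^k)*x + x^(2^k) + x) * ((x^s)^2 + x^s + 1) := by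
    intro x hx0
    have hzq : x ^ ((2:ℤ)^k) = x ^ (2^k : ℕ) := by
      rw [show ((2:ℤ)^k) = ((2^k : ℕ) : ℤ) by push_cast; ring, zpow_natCast]
    have hz2s : x ^ (2*s) = (x^s)^2 := by
      rw [two_mul, zpow_add₀ hx0, sq]
    simp only [zpow_add₀ hx0, zpow_one, hz2s, hzq]
    ring
  have hYU : ∀ x : F, x ^ (2^m+1) = 1 → (x^s) ^ (2^m+1) = 1 := by
    intro x hx
    have hx0 : x ≠ 0 := ne_zero_of_pow_eq_one (by positivity) hx
    rw [← zpow_natCast (x^s) (2^m+1), ← zpow_mul, mul_comm, zpow_mul, zpow_natCast, hx,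
      one_zpow]
  constructor
  · intro x hx
    have hx0 : x ≠ 0 := ne_zero_of_pow_eq_one (by positivity) hx
    rw [hfactD x hx0]
    exact mul_ne_zero (hgne x hx) (cube_ne_zero hme (hYU x hx))
  · have hfin : Set.Finite {x : F | x ^ (2^m+1) = 1} := Set.toFinite _
    have hmaps : Set.MapsTo
        (fun x : F => (x^(2^k)*x + x^(2^k) + x) / (x^(2^k) + x + 1))
        {x : F | x ^ (2^m+1) = 1} {x : F | x ^ (2^m+1) = 1} :=
      fun x hx => hmapsU x hx
    have hinjOn : Set.InjOn
        (fun x : F => (x^(2^k)*x + x^(2^k) + x) / (x^(2^k) + x + 1))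
        {x : F | x ^ (2^m+1) = 1} :=
      fun x₁ h₁ x₂ h₂ hh => hinj x₁ h₁ x₂ h₂ hh
    have hbij := (hfin.injOn_iff_bijOn_of_mapsTo hmaps).mp hinjOn
    refine hbij.congr ?_
    intro x hx
    have hx' : x ^ (2^m+1) = 1 := hx
    have hx0 : x ≠ 0 := ne_zero_of_pow_eq_one (by positivity) hx'
    have hcube : (x^s)^2 + x^s + 1 ≠ 0 := cube_ne_zero hme (hYU x hx')
    show (x^(2^k)*x + x^(2^k) + x) / (x^(2^k) + x + 1) = _
    beta_reduce
    rw [hfactN x hx0, hfactD x hx0, mul_div_mul_right _ _ hcube]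

end Stmt7Aux

theorem stmt_7 (m k : ℕ) (hm : 0 < m) (hme : Even m) (hk : 0 < k)
    (hgcd : Nat.gcd (2 ^ k + 1) (2 ^ m + 1) = 1) (s : ℤ) :
    (∀ x : GaloisField 2 (2 * m), x ^ (2 ^ m + 1) = 1 →
        x ^ ((2:ℤ) ^ k + 2 * s) + x ^ ((2:ℤ) ^ k + s) + x ^ ((2:ℤ) ^ k)
          + x ^ (2 * s + 1) + x ^ (2 * s) + x ^ (s + 1) + x ^ s + x + 1 ≠ 0) ∧
      Set.BijOn
        (fun x : GaloisField 2 (2 * m) =>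
          (x ^ ((2:ℤ) ^ k + 2 * s + 1) + x ^ ((2:ℤ) ^ k + 2 * s) + x ^ ((2:ℤ) ^ k + s + 1)
              + x ^ ((2:ℤ) ^ k + s) + x ^ ((2:ℤ) ^ k + 1) + x ^ ((2:ℤ) ^ k)
              + x ^ (2 * s + 1) + x ^ (s + 1) + x) /
            (x ^ ((2:ℤ) ^ k + 2 * s) + x ^ ((2:ℤ) ^ k + s) + x ^ ((2:ℤ) ^ k)
              + x ^ (2 * s + 1) + x ^ (2 * s) + x ^ (s + 1) + x ^ s + x + 1))
        {x : GaloisField 2 (2 * m) | x ^ (2 ^ m + 1) = 1}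
        {x : GaloisField 2 (2 * m) | x ^ (2 ^ m + 1) = 1} := by
  exact Stmt7Aux.main m k hm hme hk hgcd s
    (GaloisField.card 2 (2 * m) (by omega))
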